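/- Let E ⊆ Y be a finite-dimensional subspace, P_{E⊥} the orthogonal projection of Y onto the orthogonal complement of E, and let ṽ_E ∈ Y be a global minimizer over Y of the functional J_E(v) = (1/2)‖L*v‖² + ε‖P_{E⊥} v‖ − ⟨f, v⟩. Then for every z ∈ Y one has |⟨f, z⟩ − ⟨L*ṽ_E, L*z⟩| ≤ ε ‖P_{E⊥} z‖. -/

import Mathlib

open RealInnerProductSpace ContinuousLinearMap

/-- For a global minimizer ṽ_E of J_E(v) = (1/2)‖L*v‖² + ε‖P_{E⊥}v‖ − ⟨f, v⟩,
one has |⟨f, z⟩ − ⟨L*ṽ_E, L*z⟩| ≤ ε‖P_{E⊥}z‖ for every z ∈ Y. -/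
theorem finite_dimensional_variational_inequality
    {X Y : Type*} [NormedAddCommGroup X] [InnerProductSpace ℝ X] [CompleteSpace X]
    [NormedAddCommGroup Y] [InnerProductSpace ℝ Y] [CompleteSpace Y]
    (L : X →L[ℝ] Y) (hinj : Function.Injective (adjoint L))
    (f : Y) (ε : ℝ) (hε : 0 < ε)
    (E : Submodule ℝ Y) [FiniteDimensional ℝ E]
    (JE : Y → ℝ)
    (hJE : JE = fun v => (1/2) * ‖adjoint L v‖^2
        + ε * ‖v - (E.orthogonalProjection v : Y)‖ - ⟪f, v⟫)
    (vE : Y) (hmin : ∀ v : Y, JE vE ≤ JE v) :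
    ∀ z : Y, |⟪f, z⟫ - ⟪adjoint L vE, adjoint L z⟫|
        ≤ ε * ‖z - (E.orthogonalProjection z : Y)‖ := by
  set A := adjoint L with hA
  have key : ∀ w : Y, ⟪f, w⟫ - ⟪A vE, A w⟫ ≤ ε * ‖w - (E.orthogonalProjection w : Y)‖ := by
    intro w
    have h : ∀ t : ℝ, 0 < t →
        ⟪f, w⟫ - ⟪A vE, A w⟫ - ε * ‖w - (E.orthogonalProjection w : Y)‖
          ≤ t * (‖A w‖^2 / 2) := by
      intro t ht
      have hm := hmin (vE + t • w)
      rw [hJE] at hm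
      simp only at hm
      have hAs : ‖A (vE + t • w)‖^2 = ‖A vE‖^2 + 2*t*⟪A vE, A w⟫ + t^2*‖A w‖^2 := by
        rw [map_add, map_smul, norm_add_sq_real, real_inner_smul_right, norm_smul]
        rw [Real.norm_eq_abs, abs_of_pos ht]
        ring
      have hPlin : (vE + t • w) - (E.orthogonalProjection (vE + t • w) : Y)
          = (vE - (E.orthogonalProjection vE : Y)) + t • (w - (E.orthogonalProjection w : Y)) := by
        rw [map_add, map_smul]
        push_cast
        module
      have hP : ‖(vE + t • w) - (E.orthogonalProjection (vE + t • w) : Y)‖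
          ≤ ‖vE - (E.orthogonalProjection vE : Y)‖ + t * ‖w - (E.orthogonalProjection w : Y)‖ := by
        rw [hPlin]
        refine (norm_add_le _ _).trans ?_
        rw [norm_smul, Real.norm_eq_abs, abs_of_pos ht]
      have hi : ⟪f, vE + t • w⟫ = ⟪f, vE⟫ + t * ⟪f, w⟫ := by
        rw [inner_add_right, real_inner_smul_right]
      rw [hAs, hi] at hm
      have := mul_le_mul_of_nonneg_left hP (le_of_lt hε)
      nlinarith [this, hm]
    by_contra hc
    push_neg at hc
    set a := ⟪f, w⟫ - ⟪A vE, A w⟫ - ε * ‖w - (E.orthogonalProjection w : Y)‖ with ha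
    have ha0 : 0 < a := by simpa [ha] using sub_pos.mpr hc
    set c := ‖A w‖^2 / 2 with hcdef
    have hc0 : 0 ≤ c := by positivity
    have ht : (0:ℝ) < a / (c + 1) := by positivity
    have := h (a / (c + 1)) ht
    rw [div_mul_eq_mul_div] at this
    have hlt : a * c / (c + 1) < a := by
      rw [div_lt_iff₀ (by linarith)]
      nlinarith
    linarith
  intro z
  rw [abs_sub_le_iff]
  constructor
  · exact key z
  · have h2 := key (-z)
    have hPn : (-z : Y) - (E.orthogonalProjection (-z) : Y) = -(z - (E.orthogonalProjection z : Y)) := by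
      rw [map_neg]; push_cast; module
    rw [hPn, norm_neg, map_neg, inner_neg_right, inner_neg_right] at h2
    linarith
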